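/- For λ > 0, define F_λ(μ) := ∫₀¹ (1 − λμ(1−2α))^{−1/λ} dα for μ ∈ [0, 1/λ) (the base 1 − λμ(1−2α) is strictly positive there). Then the improper integral t*(λ) := ∫₀^{1/λ} F_λ(μ)^{2λ} dμ is finite if and only if λ > 1/2. -/

import Mathlib

set_option maxHeartbeats 1000000
open Real Set MeasureTheory intervalIntegral

lemma aux_cont {s k r : ℝ} (hs : 0 < s) (hk : 0 ≤ k) :
    IntervalIntegrable (fun α => (s + k*α) ^ r) volume 0 1 := by
  apply ContinuousOn.intervalIntegrable
  apply ContinuousOn.rpow_const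
  · fun_prop
  · intro x hx
    rw [uIcc_of_le zero_le_one] at hx
    have : 0 < s + k*x := by nlinarith [hx.1]
    exact Or.inl this.ne'

lemma aux_int {s k r : ℝ} (hs : 0 < s) (hk : 0 < k) (hr : r ≠ -1) :
    ∫ α in (0:ℝ)..1, (s + k*α) ^ r = ((s+k)^(r+1) - s^(r+1)) / (k*(r+1)) := by
  have h1 : (fun α : ℝ => (s + k*α) ^ r) = fun α => (fun x : ℝ => x ^ r) (k*α + s) := by
    funext α; rw [add_comm]
  rw [h1, intervalIntegral.integral_comp_mul_add (fun x : ℝ => x ^ r) hk.ne' s]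
  have h0 : (0:ℝ) ∉ Set.uIcc (k*0+s) (k*1+s) := by
    rw [uIcc_of_le (by nlinarith)]
    intro h
    exact absurd h.1 (by nlinarith)
  rw [integral_rpow (Or.inr ⟨hr, h0⟩)]
  have hr1 : r + 1 ≠ 0 := by intro h; exact hr (by linarith)
  rw [smul_eq_mul]
  rw [mul_zero, mul_one, zero_add, add_comm k s]
  field_simp

noncomputable def Ftil (lam : ℝ) : ℝ → ℝ := fun μ =>
  ∫ α in Ioc (0:ℝ) 1, Real.exp ((-(1/lam)) * Real.log (1 - lam*μ*(1-2*α)))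

lemma Ftil_sm (lam : ℝ) : StronglyMeasurable (Ftil lam) := by
  have hm : Measurable (fun z : ℝ × ℝ =>
      Real.exp ((-(1/lam)) * Real.log (1 - lam*z.1*(1-2*z.2)))) := by
    apply Real.measurable_exp.comp
    apply Measurable.const_mul
    exact Real.measurable_log.comp (by fun_prop)
  exact hm.stronglyMeasurable.integral_prod_right'

lemma Gtil_sm (lam : ℝ) (hlam : 0 < lam) :
    StronglyMeasurable (fun μ => (Ftil lam μ) ^ (2*lam)) :=
  (Real.continuous_rpow_const (by positivity)).comp_stronglyMeasurable (Ftil_sm lam)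

lemma F_eq (lam : ℝ) (hlam : 0 < lam) {μ : ℝ} (h1 : 0 ≤ μ) (h2 : lam * μ < 1) :
    (∫ α in (0:ℝ)..1, (1 - lam*μ*(1-2*α)) ^ (-(1/lam))) = Ftil lam μ := by
  rw [intervalIntegral.integral_of_le zero_le_one]
  apply MeasureTheory.setIntegral_congr_fun measurableSet_Ioc
  intro α hα
  simp only
  have hb : 0 < 1 - lam*μ*(1-2*α) := by nlinarith [mul_nonneg (mul_nonneg hlam.le h1) hα.1.le]
  rw [Real.rpow_def_of_pos hb, mul_comm]

lemma G_aesm (lam : ℝ) (hlam : 0 < lam) :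
    AEStronglyMeasurable
      (fun μ => (∫ α in (0:ℝ)..1, (1 - lam * μ * (1 - 2*α)) ^ (-(1/lam))) ^ (2*lam))
      (volume.restrict (Ioc 0 (1/lam))) := by
  refine (Gtil_sm lam hlam).aestronglyMeasurable.congr ?_
  rw [← Measure.restrict_congr_set Ioo_ae_eq_Ioc]
  filter_upwards [ae_restrict_mem measurableSet_Ioo] with μ hμ
  have h2 : lam * μ < 1 := by
    have := (lt_div_iff₀ hlam).mp hμ.2
    linarith
  rw [F_eq lam hlam hμ.1.le h2]

lemma upper (lam p : ℝ) (hlam : 0 < lam) (hp0 : 0 < p) (hpl : p ≤ lam) (hp1 : p < 1)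
    (hq : -1 < 2*lam*(1-1/p)) :
    IntervalIntegrable
      (fun μ => (∫ α in (0:ℝ)..1, (1 - lam * μ * (1 - 2*α)) ^ (-(1/lam))) ^ (2*lam))
      volume 0 (1/lam) := by
  have hT : 0 < 1/lam := by positivity
  have hM : 0 < 1/(2*lam) := by positivity
  have hMT : 1/(2*lam) < 1/lam := by
    apply one_div_lt_one_div_of_lt hlam
    linarith
  have hinvp : 1 < 1/p := by rw [lt_div_iff₀ hp0]; linarith
  have hinvple : 1/lam ≤ 1/p := one_div_le_one_div_of_le hp0 hpl
  have hK : 0 < 1/(1/p-1) := by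
    apply one_div_pos.mpr; linarith
  have hGae := G_aesm lam hlam
  rw [intervalIntegrable_iff_integrableOn_Ioc_of_le hT.le]
  have hfun : (fun μ => (∫ α in (0:ℝ)..1, (1 - lam * μ * (1 - 2*α)) ^ (-(1/lam))) ^ (2*lam))
      = fun μ => (∫ α in (0:ℝ)..1, ((1-lam*μ) + (2*lam*μ)*α) ^ (-(1/lam))) ^ (2*lam) := by
    funext μ
    congr 1
    apply intervalIntegral.integral_congr
    intro α _
    congr 1
    ring
  rw [hfun] at hGae ⊢
  -- Piece A : on Ioc 0 (1/(2*lam))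
  have hpieceA : IntegrableOn
      (fun μ => (∫ α in (0:ℝ)..1, ((1-lam*μ) + (2*lam*μ)*α) ^ (-(1/lam))) ^ (2*lam))
      (Ioc 0 (1/(2*lam))) := by
    apply Integrable.mono' (g := fun _ => ((2:ℝ)⁻¹ ^ (-(1/lam)))^(2*lam))
        (integrableOn_const measure_Ioc_lt_top.ne)
        (hGae.mono_measure (Measure.restrict_mono (Ioc_subset_Ioc_right hMT.le) le_rfl))
    filter_upwards [ae_restrict_mem measurableSet_Ioc] with μ hμ
    obtain ⟨hμ0, hμM⟩ := hμ
    have hsge : (2:ℝ)⁻¹ ≤ 1 - lam*μ := by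
      have := (le_div_iff₀ (by positivity : (0:ℝ) < 2*lam)).mp hμM
      nlinarith
    have hF0 : 0 ≤ ∫ α in (0:ℝ)..1, ((1-lam*μ) + (2*lam*μ)*α) ^ (-(1/lam)) := by
      apply intervalIntegral.integral_nonneg zero_le_one
      intro α hα
      apply rpow_nonneg
      nlinarith [mul_nonneg (mul_nonneg (by positivity : (0:ℝ) ≤ 2*lam) hμ0.le) hα.1]
    have hFle : (∫ α in (0:ℝ)..1, ((1-lam*μ) + (2*lam*μ)*α) ^ (-(1/lam)))
        ≤ (2:ℝ)⁻¹ ^ (-(1/lam)) := by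
      have hs : 0 < 1 - lam*μ := by nlinarith
      have := intervalIntegral.integral_mono_on (μ := volume) zero_le_one
        (aux_cont hs (by positivity : (0:ℝ) ≤ 2*lam*μ))
        (_root_.intervalIntegrable_const (c := (2:ℝ)⁻¹ ^ (-(1/lam))))
        (fun α hα => by
          apply rpow_le_rpow_of_nonpos (by norm_num)
          · nlinarith [mul_nonneg (mul_nonneg (by positivity : (0:ℝ) ≤ 2*lam) hμ0.le) hα.1]
          · simp only [neg_nonpos]; positivity)
      simpa using this
    rw [Real.norm_eq_abs, abs_of_nonneg (rpow_nonneg hF0 _)]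
    exact rpow_le_rpow hF0 hFle (by positivity)
  -- Piece B : on Ioc (1/(2*lam)) (1/lam)
  have hbnd : IntervalIntegrable
      (fun x : ℝ => (1/(1/p-1)+1)^(2*lam) * (1 - lam*x) ^ (2*lam*(1-1/p)))
      volume (1/(2*lam)) (1/lam) := by
    have h1 : IntervalIntegrable (fun x : ℝ => x ^ (2*lam*(1-1/p))) volume 0 (1/2) :=
      intervalIntegrable_rpow' hq
    have h2 := h1.comp_sub_left 1
    have h3 := h2.comp_mul_left (c := lam)
    rw [show ((1:ℝ)-0)/lam = 1/lam by norm_num,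
        show ((1:ℝ)-1/2)/lam = 1/(2*lam) by rw [show (1:ℝ)-1/2 = 1/2 by norm_num, div_div]] at h3
    simpa using (h3.symm.const_mul ((1/(1/p-1)+1)^(2*lam)))
  have hpieceB : IntegrableOn
      (fun μ => (∫ α in (0:ℝ)..1, ((1-lam*μ) + (2*lam*μ)*α) ^ (-(1/lam))) ^ (2*lam))
      (Ioc (1/(2*lam)) (1/lam)) := by
    apply Integrable.mono'
        ((intervalIntegrable_iff_integrableOn_Ioc_of_le hMT.le).mp hbnd)
        (hGae.mono_measure (Measure.restrict_mono (Ioc_subset_Ioc_left hM.le) le_rfl))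
    rw [← Measure.restrict_congr_set Ioo_ae_eq_Ioc]
    filter_upwards [ae_restrict_mem measurableSet_Ioo] with μ hμ
    obtain ⟨hμ1, hμ2⟩ := hμ
    have hμ0 : 0 < μ := hM.trans hμ1
    have hs : 0 < 1 - lam*μ := by
      have := (lt_div_iff₀ hlam).mp hμ2; linarith
    have hs1 : 1 - lam*μ ≤ 1 := by nlinarith
    have hc1 : 1 ≤ 2*lam*μ := by
      have := (div_lt_iff₀ (by positivity : (0:ℝ) < 2*lam)).mp hμ1
      nlinarith
    have hc0 : (0:ℝ) ≤ 2*lam*μ := by positivity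
    have hF0 : 0 ≤ ∫ α in (0:ℝ)..1, ((1-lam*μ) + (2*lam*μ)*α) ^ (-(1/lam)) := by
      apply intervalIntegral.integral_nonneg zero_le_one
      intro α hα
      apply rpow_nonneg
      nlinarith [mul_nonneg hc0 hα.1]
    -- step 1 : compare with p-integrand
    have step1 : (∫ α in (0:ℝ)..1, ((1-lam*μ) + (2*lam*μ)*α) ^ (-(1/lam)))
        ≤ ∫ α in (0:ℝ)..1, (((1-lam*μ) + 1*α) ^ (-(1/p)) + 1) := by
      apply intervalIntegral.integral_mono_on zero_le_one
        (aux_cont hs hc0)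
        ((aux_cont hs zero_le_one).add _root_.intervalIntegrable_const)
      intro α hα
      have hb0 : 0 < (1-lam*μ) + 2*lam*μ*α := by nlinarith [mul_nonneg hc0 hα.1]
      have hb0' : 0 < (1-lam*μ) + 1*α := by nlinarith [hα.1]
      rcases le_or_gt ((1-lam*μ) + 2*lam*μ*α) 1 with hle1 | hgt1
      · have e1 : ((1-lam*μ) + 2*lam*μ*α)^(-(1/lam)) ≤ ((1-lam*μ) + 2*lam*μ*α)^(-(1/p)) :=
          rpow_le_rpow_of_exponent_ge hb0 hle1 (by linarith)
        have e2 : ((1-lam*μ) + 2*lam*μ*α)^(-(1/p)) ≤ ((1-lam*μ) + 1*α)^(-(1/p)) := by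
          apply rpow_le_rpow_of_nonpos hb0'
          · nlinarith [hα.1]
          · simp only [neg_nonpos]; positivity
        linarith
      · have e1 : ((1-lam*μ) + 2*lam*μ*α)^(-(1/lam)) ≤ 1 :=
          rpow_le_one_of_one_le_of_nonpos hgt1.le (by simp only [neg_nonpos]; positivity)
        have e2 : (0:ℝ) ≤ ((1-lam*μ) + 1*α)^(-(1/p)) := rpow_nonneg hb0'.le _
        linarith
    -- step 2 : compute the p-integral
    have hrp : -(1/p) ≠ -1 := by
      intro hcon
      have h1p : (1:ℝ)/p = 1 := by linarith
      linarith
    have step2 : (∫ α in (0:ℝ)..1, (((1-lam*μ) + 1*α) ^ (-(1/p)) + 1))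
        = (((1-lam*μ)+1)^(-(1/p)+1) - (1-lam*μ)^(-(1/p)+1)) / (1*(-(1/p)+1)) + 1 := by
      rw [intervalIntegral.integral_add (aux_cont hs zero_le_one) _root_.intervalIntegrable_const,
          aux_int hs one_pos hrp]
      simp
    -- step 3 : bound the p-integral
    have he : -(1/p)+1 < 0 := by linarith
    have step3 : (((1-lam*μ)+1)^(-(1/p)+1) - (1-lam*μ)^(-(1/p)+1)) / (1*(-(1/p)+1))
        ≤ (1/(1/p-1)) * (1-lam*μ)^(-(1/p)+1) := by
      rw [one_mul, div_le_iff_of_neg he]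
      have hne : 1/p - 1 ≠ 0 := ne_of_gt (by linarith)
      have hKe : (1/(1/p-1)) * (-(1/p)+1) = -1 := by
        field_simp
        rw [div_eq_iff (by linarith : (1:ℝ)-p ≠ 0)]
        ring
      have hKe' : (1/(1/p-1)) * (1-lam*μ)^(-(1/p)+1) * (-(1/p)+1)
          = -((1-lam*μ)^(-(1/p)+1)) := by
        linear_combination ((1-lam*μ)^(-(1/p)+1)) * hKe
      rw [hKe']
      have : (0:ℝ) ≤ ((1-lam*μ)+1)^(-(1/p)+1) := rpow_nonneg (by linarith) _
      linarith
    have hone : (1:ℝ) ≤ (1-lam*μ)^(-(1/p)+1) := by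
      have := rpow_le_rpow_of_exponent_ge hs hs1 (le_of_lt he)
      rwa [rpow_zero] at this
    have step5 : (∫ α in (0:ℝ)..1, ((1-lam*μ) + (2*lam*μ)*α) ^ (-(1/lam)))
        ≤ (1/(1/p-1)+1) * (1-lam*μ)^(-(1/p)+1) := by
      have := step1.trans (le_of_eq step2)
      nlinarith
    rw [Real.norm_eq_abs, abs_of_nonneg (rpow_nonneg hF0 _)]
    calc (∫ α in (0:ℝ)..1, ((1-lam*μ) + (2*lam*μ)*α) ^ (-(1/lam))) ^ (2*lam)
        ≤ ((1/(1/p-1)+1) * (1-lam*μ)^(-(1/p)+1)) ^ (2*lam) :=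
          rpow_le_rpow hF0 step5 (by positivity)
      _ = (1/(1/p-1)+1)^(2*lam) * (1-lam*μ) ^ (2*lam*(1-1/p)) := by
          rw [mul_rpow (by positivity) (rpow_nonneg hs.le _), ← Real.rpow_mul hs.le,
              show (-(1/p)+1)*(2*lam) = 2*lam*(1-1/p) by ring]
  rw [← Set.Ioc_union_Ioc_eq_Ioc hM.le hMT.le]
  exact hpieceA.union hpieceB

lemma lower (lam : ℝ) (hlam : 0 < lam) (hle : lam ≤ 1/2)
    (h : IntervalIntegrable
      (fun μ => (∫ α in (0:ℝ)..1, (1 - lam * μ * (1 - 2*α)) ^ (-(1/lam))) ^ (2*lam))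
      volume 0 (1/lam)) : False := by
  have hT : 0 < 1/lam := by positivity
  have hM : 0 < 1/(2*lam) := by positivity
  have hMT : 1/(2*lam) < 1/lam := by
    apply one_div_lt_one_div_of_lt hlam; linarith
  have hq' : 2*lam*(1-1/lam) = 2*lam - 2 := by field_simp
  have hc₁ : 0 < 1/(4*(1/lam-1)) := by
    have h2 : (2:ℝ) ≤ 1/lam := by rw [le_div_iff₀ hlam]; linarith
    apply one_div_pos.mpr; linarith
  set c₁ := 1/(4*(1/lam-1)) with hc₁def
  have hC : 0 < c₁^(2*lam) := rpow_pos_of_pos hc₁ _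
  have hfun : (fun μ => (∫ α in (0:ℝ)..1, (1 - lam * μ * (1 - 2*α)) ^ (-(1/lam))) ^ (2*lam))
      = fun μ => (∫ α in (0:ℝ)..1, ((1-lam*μ) + (2*lam*μ)*α) ^ (-(1/lam))) ^ (2*lam) := by
    funext μ
    congr 1
    apply intervalIntegral.integral_congr
    intro α _
    congr 1
    ring
  rw [hfun] at h
  have h' : IntervalIntegrable
      (fun μ => (∫ α in (0:ℝ)..1, ((1-lam*μ) + (2*lam*μ)*α) ^ (-(1/lam))) ^ (2*lam))
      volume (1/(2*lam)) (1/lam) := by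
    apply h.mono_set
    rw [uIcc_of_le hMT.le, uIcc_of_le hT.le]
    exact Icc_subset_Icc hM.le le_rfl
  have hGint := (intervalIntegrable_iff_integrableOn_Ioc_of_le hMT.le).mp h'
  -- the lower bound function is integrable by comparison
  have hb_aesm : AEStronglyMeasurable (fun μ => c₁^(2*lam) * (1-lam*μ)^(2*lam*(1-1/lam)))
      (volume.restrict (Ioc (1/(2*lam)) (1/lam))) := by
    rw [← Measure.restrict_congr_set Ioo_ae_eq_Ioc]
    apply ContinuousOn.aestronglyMeasurable _ measurableSet_Ioo
    apply ContinuousOn.mul continuousOn_const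
    apply ContinuousOn.rpow_const (by fun_prop)
    intro x hx
    have : 0 < 1 - lam*x := by
      have := (lt_div_iff₀ hlam).mp hx.2; linarith
    exact Or.inl this.ne'
  have hbound_int : IntegrableOn (fun μ => c₁^(2*lam) * (1-lam*μ)^(2*lam*(1-1/lam)))
      (Ioc (1/(2*lam)) (1/lam)) := by
    apply Integrable.mono' hGint hb_aesm
    rw [← Measure.restrict_congr_set Ioo_ae_eq_Ioc]
    filter_upwards [ae_restrict_mem measurableSet_Ioo] with μ hμ
    obtain ⟨hμ1, hμ2⟩ := hμ
    have hμ0 : 0 < μ := hM.trans hμ1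
    have hs : 0 < 1 - lam*μ := by
      have := (lt_div_iff₀ hlam).mp hμ2; linarith
    have hshalf : 1 - lam*μ < 1/2 := by
      have := (div_lt_iff₀ (by positivity : (0:ℝ) < 2*lam)).mp hμ1
      nlinarith
    have hc0 : (0:ℝ) ≤ 2*lam*μ := by positivity
    have hc2 : 2*lam*μ ≤ 2 := by
      have := (lt_div_iff₀ hlam).mp hμ2; nlinarith
    have he' : -(1/lam)+1 ≤ -1 := by
      have h2 : (2:ℝ) ≤ 1/lam := by rw [le_div_iff₀ hlam]; linarith
      linarith
    have hrl : -(1/lam) ≠ -1 := by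
      intro hcon
      have h2 : (2:ℝ) ≤ 1/lam := by rw [le_div_iff₀ hlam]; linarith
      linarith
    -- F ≥ ∫ (s+2α)^r
    have step1 : (∫ α in (0:ℝ)..1, ((1-lam*μ) + 2*α) ^ (-(1/lam)))
        ≤ ∫ α in (0:ℝ)..1, ((1-lam*μ) + (2*lam*μ)*α) ^ (-(1/lam)) := by
      apply intervalIntegral.integral_mono_on zero_le_one
        (aux_cont hs (by norm_num)) (aux_cont hs hc0)
      intro α hα
      apply rpow_le_rpow_of_nonpos
      · nlinarith [mul_nonneg hc0 hα.1]
      · nlinarith [hα.1]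
      · simp only [neg_nonpos]; positivity
    have step2 : (∫ α in (0:ℝ)..1, ((1-lam*μ) + 2*α) ^ (-(1/lam)))
        = (((1-lam*μ)+2)^(-(1/lam)+1) - (1-lam*μ)^(-(1/lam)+1)) / (2*(-(1/lam)+1)) :=
      aux_int hs two_pos hrl
    -- lower bound for the computed integral
    have hX2 : (2:ℝ) ≤ (1-lam*μ)^(-(1/lam)+1) := by
      have h1 : (1-lam*μ)^(-1:ℝ) ≤ (1-lam*μ)^(-(1/lam)+1) :=
        rpow_le_rpow_of_exponent_ge hs (by linarith) he'
      have h2 : (2:ℝ) ≤ (1-lam*μ)⁻¹ := by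
        rw [show (2:ℝ) = (1/2)⁻¹ by norm_num]
        apply inv_anti₀ hs hshalf.le
      rw [rpow_neg_one] at h1
      linarith
    have hY1 : ((1-lam*μ)+2)^(-(1/lam)+1) ≤ 1 :=
      rpow_le_one_of_one_le_of_nonpos (by linarith) (by linarith)
    have hY0 : (0:ℝ) ≤ ((1-lam*μ)+2)^(-(1/lam)+1) := rpow_nonneg (by linarith) _
    have hene : (1:ℝ)/lam - 1 ≠ 0 := by
      have h2 : (2:ℝ) ≤ 1/lam := by rw [le_div_iff₀ hlam]; linarith
      intro hcon; linarith
    have hc1e : c₁ * (2*(-(1/lam)+1)) = -(1/2) := by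
      rw [hc₁def, div_mul_eq_mul_div, div_eq_iff (by intro hc; apply hene; linarith : 4*(1/lam-1) ≠ 0)]
      ring
    have step3 : c₁ * (1-lam*μ)^(-(1/lam)+1)
        ≤ (((1-lam*μ)+2)^(-(1/lam)+1) - (1-lam*μ)^(-(1/lam)+1)) / (2*(-(1/lam)+1)) := by
      rw [le_div_iff_of_neg (by nlinarith : 2*(-(1/lam)+1) < 0)]
      have hrwc : c₁ * (1-lam*μ)^(-(1/lam)+1) * (2*(-(1/lam)+1))
          = -(1/2) * (1-lam*μ)^(-(1/lam)+1) := by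
        linear_combination ((1-lam*μ)^(-(1/lam)+1)) * hc1e
      rw [hrwc]
      linarith
    have hF0 : 0 ≤ ∫ α in (0:ℝ)..1, ((1-lam*μ) + (2*lam*μ)*α) ^ (-(1/lam)) := by
      apply intervalIntegral.integral_nonneg zero_le_one
      intro α hα
      apply rpow_nonneg
      nlinarith [mul_nonneg hc0 hα.1]
    have hFge : c₁ * (1-lam*μ)^(-(1/lam)+1)
        ≤ ∫ α in (0:ℝ)..1, ((1-lam*μ) + (2*lam*μ)*α) ^ (-(1/lam)) := by
      exact (step3.trans (le_of_eq step2.symm)).trans step1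
    -- conclude the pointwise bound
    have hfinal : c₁^(2*lam) * (1-lam*μ)^(2*lam*(1-1/lam))
        ≤ (∫ α in (0:ℝ)..1, ((1-lam*μ) + (2*lam*μ)*α) ^ (-(1/lam))) ^ (2*lam) := by
      have h3 : (c₁ * (1-lam*μ)^(-(1/lam)+1))^(2*lam)
          ≤ (∫ α in (0:ℝ)..1, ((1-lam*μ) + (2*lam*μ)*α) ^ (-(1/lam))) ^ (2*lam) :=
        rpow_le_rpow (by positivity) hFge (by positivity)
      calc c₁^(2*lam) * (1-lam*μ)^(2*lam*(1-1/lam))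
          = (c₁ * (1-lam*μ)^(-(1/lam)+1))^(2*lam) := by
            rw [mul_rpow hc₁.le (rpow_nonneg hs.le _), ← Real.rpow_mul hs.le,
                show (-(1/lam)+1)*(2*lam) = 2*lam*(1-1/lam) by ring]
        _ ≤ _ := h3
    rw [Real.norm_eq_abs, abs_of_nonneg (by positivity)]
    exact hfinal
  -- remove the constant
  have h5 : IntegrableOn (fun μ => (1-lam*μ)^(2*lam*(1-1/lam)))
      (Ioc (1/(2*lam)) (1/lam)) := by
    have heq : (fun μ : ℝ => (1-lam*μ)^(2*lam*(1-1/lam)))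
        = fun μ => (c₁^(2*lam))⁻¹ * (c₁^(2*lam) * (1-lam*μ)^(2*lam*(1-1/lam))) := by
      funext μ
      rw [← mul_assoc, inv_mul_cancel₀ hC.ne', one_mul]
    rw [heq]
    exact hbound_int.const_mul _
  have h6 := (intervalIntegrable_iff_integrableOn_Ioc_of_le hMT.le).mpr h5
  -- transform to a pure power integrability on (0, 1/2)
  have h7 := h6.comp_mul_left (c := 1/lam)
  rw [show (1/(2*lam))/(1/lam) = 1/2 by field_simp,
      show (1/lam)/(1/lam) = 1 by field_simp] at h7
  have h8 : (fun x : ℝ => (1 - lam*(1/lam*x))^(2*lam*(1-1/lam)))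
      = fun x : ℝ => (1-x)^(2*lam*(1-1/lam)) := by
    funext x
    congr 2
    field_simp
  rw [h8] at h7
  have h9 := h7.comp_sub_left 1
  rw [show (1:ℝ) - 1/2 = 1/2 by norm_num, show (1:ℝ) - 1 = 0 by norm_num] at h9
  have h10 : (fun x : ℝ => (1 - (1-x))^(2*lam*(1-1/lam)))
      = fun x : ℝ => x^(2*lam*(1-1/lam)) := by
    funext x
    congr 1
    ring
  rw [h10] at h9
  have h11 := (intervalIntegrable_iff_integrableOn_Ioo_of_le (by norm_num : (0:ℝ) ≤ 1/2)).mp h9.symm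
  have h12 := (integrableOn_Ioo_rpow_iff (by norm_num : (0:ℝ) < 1/2)).mp h11
  rw [hq'] at h12
  linarith


/-- for `λ > 0`, the improper integral
`t*(λ) = ∫₀^{1/λ} (∫₀¹ (1 − λμ(1−2α))^{−1/λ} dα)^{2λ} dμ` is finite iff `λ > 1/2`. -/
theorem statement19 (lam : ℝ) (hlam : 0 < lam) :
    IntervalIntegrable
      (fun μ => (∫ α in (0:ℝ)..1, (1 - lam * μ * (1 - 2*α)) ^ (-(1/lam))) ^ (2*lam))
      volume 0 (1/lam)
    ↔ 1/2 < lam := by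
  constructor
  · intro h
    by_contra hc
    push_neg at hc
    exact lower lam hlam hc h
  · intro hhalf
    rcases le_total lam 1 with hl1 | hl1
    · have hD : (0:ℝ) < 2*lam+1 := by linarith
      have ha : 2*lam/(2*lam+1) < lam := by
        rw [div_lt_iff₀ hD]; nlinarith
      have ha0 : 0 < 2*lam/(2*lam+1) := by positivity
      set p := (2*lam/(2*lam+1) + lam)/2 with hpdef
      have hp0 : 0 < p := by rw [hpdef]; positivity
      have hplt : p < lam := by rw [hpdef]; linarith
      have hp1 : p < 1 := by linarith
      have hpgt : 2*lam/(2*lam+1) < p := by rw [hpdef]; linarith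
      have hq : -1 < 2*lam*(1-1/p) := by
        have h5 : 2*lam/p < 2*lam+1 := by
          rw [div_lt_iff₀ hp0]
          have := (div_lt_iff₀ hD).mp hpgt
          nlinarith
        have heq : 2*lam*(1-1/p) = 2*lam - 2*lam/p := by ring
        rw [heq]; linarith
      exact upper lam p hlam hp0 hplt.le hp1 hq
    · have hD : (0:ℝ) < 4*lam+1 := by linarith
      set p := 4*lam/(4*lam+1) with hpdef
      have hp0 : 0 < p := by rw [hpdef]; positivity
      have hpl : p ≤ lam := by rw [hpdef, div_le_iff₀ hD]; nlinarith
      have hp1 : p < 1 := by rw [hpdef, div_lt_one hD]; linarith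
      have hq : -1 < 2*lam*(1-1/p) := by
        have h1p : (1:ℝ)/p = (4*lam+1)/(4*lam) := by
          rw [hpdef, one_div_div]
        rw [h1p]
        have hval : 2*lam*(1-(4*lam+1)/(4*lam)) = -(1/2) := by
          field_simp
          ring
        rw [hval]; norm_num
      exact upper lam p hlam hp0 hpl hp1 hq
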